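/- (Uniqueness of measures on a generated abstract σ-algebra.) Let Σ be an abstract σ-algebra and B₀ ⊆ Σ a Boolean subalgebra (⊥, ⊤ ∈ B₀ and B₀ is closed under ⊓, ⊔ and complements) which generates Σ: the only subset of Σ containing B₀, closed under complements, and containing a least upper bound of each of its ℕ-indexed families, is Σ itself. If μ₁ and μ₂ are measures on Σ with μ₁ ⊤ ≤ 1 and μ₁ a = μ₂ a for all a ∈ B₀, then μ₁ = μ₂. -/

import Mathlib

open scoped ENNReal

section Aux

variable {A : Type*} [BooleanAlgebra A]

/-- A sequence taking values `x`, `y`, then `⊥`. -/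
def pairSeq (x y : A) : ℕ → A := fun n => if n = 0 then x else if n = 1 then y else ⊥

lemma pairSeq_zero (x y : A) : pairSeq x y 0 = x := rfl

lemma pairSeq_one (x y : A) : pairSeq x y 1 = y := rfl

lemma pairSeq_isLUB (x y : A) : IsLUB (Set.range (pairSeq x y)) (x ⊔ y) := by
  constructor
  · rintro _ ⟨n, rfl⟩
    unfold pairSeq
    split_ifs <;> simp
  · intro u hu
    have hx : x ≤ u := hu ⟨0, rfl⟩
    have hy : y ≤ u := hu ⟨1, rfl⟩
    exact sup_le hx hy

lemma pairSeq_disj {x y : A} (h : x ⊓ y = ⊥) :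
    ∀ i j, i ≠ j → pairSeq x y i ⊓ pairSeq x y j = ⊥ := by
  intro i j hij
  unfold pairSeq
  split_ifs <;> simp_all [inf_comm x y]

lemma tsum_pairSeq {x y : A} (μ : A → ℝ≥0∞) (h0 : μ ⊥ = 0) :
    ∑' n, μ (pairSeq x y n) = μ x + μ y := by
  rw [tsum_eq_sum (s := {0, 1})]
  · simp [pairSeq]
  · intro n hn
    simp only [Finset.mem_insert, Finset.mem_singleton] at hn
    push_neg at hn
    simp [pairSeq, hn.1, hn.2, h0]

lemma isLUB_inf {a : ℕ → A} {s : A} (y : A) (hs : IsLUB (Set.range a) s) :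
    IsLUB (Set.range fun n => a n ⊓ y) (s ⊓ y) := by
  constructor
  · rintro _ ⟨n, rfl⟩
    exact inf_le_inf_right y (hs.1 ⟨n, rfl⟩)
  · intro u hu
    have hle : s ≤ u ⊔ yᶜ := by
      apply hs.2
      rintro _ ⟨n, rfl⟩
      have h1 : a n ⊓ y ≤ u := hu ⟨n, rfl⟩
      calc a n = a n ⊓ (y ⊔ yᶜ) := by simp
        _ = (a n ⊓ y) ⊔ (a n ⊓ yᶜ) := inf_sup_left _ _ _
        _ ≤ u ⊔ yᶜ := sup_le_sup h1 inf_le_right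
    calc s ⊓ y ≤ (u ⊔ yᶜ) ⊓ y := inf_le_inf_right y hle
      _ = (u ⊓ y) ⊔ (yᶜ ⊓ y) := inf_sup_right _ _ _
      _ ≤ u := by simp

end Aux
theorem measure_unique_of_generating {A : Type*} [BooleanAlgebra A]
    (hA : ∀ a : ℕ → A, ∃ s, IsLUB (Set.range a) s)
    (B₀ : Set A)
    (hbot : ⊥ ∈ B₀) (htop : ⊤ ∈ B₀)
    (hinf : ∀ a ∈ B₀, ∀ b ∈ B₀, a ⊓ b ∈ B₀)
    (hsup : ∀ a ∈ B₀, ∀ b ∈ B₀, a ⊔ b ∈ B₀)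
    (hcompl : ∀ a ∈ B₀, aᶜ ∈ B₀)
    (hgen : ∀ S : Set A, B₀ ⊆ S → (∀ x ∈ S, xᶜ ∈ S) →
      (∀ a : ℕ → A, (∀ n, a n ∈ S) → ∀ s : A, IsLUB (Set.range a) s → s ∈ S) →
      S = Set.univ)
    (μ₁ μ₂ : A → ℝ≥0∞)
    (h₁0 : μ₁ ⊥ = 0)
    (h₁ : ∀ a : ℕ → A, (∀ i j, i ≠ j → a i ⊓ a j = ⊥) →
      ∀ s, IsLUB (Set.range a) s → μ₁ s = ∑' n, μ₁ (a n))
    (h₂0 : μ₂ ⊥ = 0)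
    (h₂ : ∀ a : ℕ → A, (∀ i j, i ≠ j → a i ⊓ a j = ⊥) →
      ∀ s, IsLUB (Set.range a) s → μ₂ s = ∑' n, μ₂ (a n))
    (htop1 : μ₁ ⊤ ≤ 1)
    (heq : ∀ a ∈ B₀, μ₁ a = μ₂ a) :
    μ₁ = μ₂ := by
  -- `L` is the λ-system generated by `B₀`.
  set L : Set A := {x | ∀ S : Set A, B₀ ⊆ S → (∀ y ∈ S, yᶜ ∈ S) →
    (∀ a : ℕ → A, (∀ i j, i ≠ j → a i ⊓ a j = ⊥) → (∀ n, a n ∈ S) →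
      ∀ s, IsLUB (Set.range a) s → s ∈ S) → x ∈ S} with hLdef
  have hLsub : B₀ ⊆ L := fun b hb S hS _ _ => hS hb
  have hLcompl : ∀ x ∈ L, xᶜ ∈ L := fun x hx S hS hc hd => hc x (hx S hS hc hd)
  have hLdsup : ∀ a : ℕ → A, (∀ i j, i ≠ j → a i ⊓ a j = ⊥) → (∀ n, a n ∈ L) →
      ∀ s, IsLUB (Set.range a) s → s ∈ L := fun a hdisj ha s hs S hS hc hd =>
    hd a hdisj (fun n => ha n S hS hc hd) s hs
  -- `L` is closed under disjoint binary sups.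
  have hLpair : ∀ x ∈ L, ∀ y ∈ L, x ⊓ y = ⊥ → x ⊔ y ∈ L := by
    intro x hx y hy hxy
    refine hLdsup (pairSeq x y) (pairSeq_disj hxy) ?_ _ (pairSeq_isLUB x y)
    intro n
    unfold pairSeq
    split_ifs <;> [exact hx; exact hy; exact hLsub hbot]
  -- good-sets argument
  have good : ∀ K : Set A, K ⊆ L → (∀ b ∈ B₀, ∀ y ∈ K, b ⊓ y ∈ L) →
      ∀ x ∈ L, ∀ y ∈ K, x ⊓ y ∈ L := by
    intro K hK hB x hx y hy
    have hmem : x ∈ {z | z ∈ L ∧ ∀ y ∈ K, z ⊓ y ∈ L} := by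
      refine hx _ ?_ ?_ ?_
      · intro b hb
        exact ⟨hLsub hb, fun y hy => hB b hb y hy⟩
      · rintro z ⟨hzL, hz⟩
        refine ⟨hLcompl z hzL, fun y hy => ?_⟩
        have h1 : (yᶜ ⊔ (z ⊓ y)) ∈ L := by
          refine hLpair _ (hLcompl y (hK hy)) _ (hz y hy) ?_
          rw [inf_comm, inf_assoc]
          simp
        have h2 : (yᶜ ⊔ (z ⊓ y))ᶜ = zᶜ ⊓ y := by
          rw [compl_sup, compl_compl, compl_inf, inf_sup_left]
          simp [inf_comm]
        have := hLcompl _ h1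
        rwa [h2] at this
      · intro a hdisj ha s hs
        refine ⟨hLdsup a hdisj (fun n => (ha n).1) s hs, fun y hy => ?_⟩
        refine hLdsup (fun n => a n ⊓ y) ?_ (fun n => (ha n).2 y hy) _ (isLUB_inf y hs)
        intro i j hij
        have : (a i ⊓ y) ⊓ (a j ⊓ y) ≤ a i ⊓ a j := by
          exact inf_le_inf inf_le_left inf_le_left
        rw [hdisj i j hij] at this
        exact le_bot_iff.mp this
    exact hmem.2 y hy
  have hgood1 : ∀ x ∈ L, ∀ b ∈ B₀, x ⊓ b ∈ L :=
    good B₀ hLsub (fun b hb y hy => hLsub (hinf b hb y hy))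
  have hLinf : ∀ x ∈ L, ∀ y ∈ L, x ⊓ y ∈ L := by
    refine good L (fun z hz => hz) ?_
    intro b hb y hy
    rw [inf_comm]
    exact hgood1 y hy b hb
  have hLsup : ∀ x ∈ L, ∀ y ∈ L, x ⊔ y ∈ L := by
    intro x hx y hy
    have := hLcompl _ (hLinf _ (hLcompl x hx) _ (hLcompl y hy))
    rwa [compl_inf, compl_compl, compl_compl] at this
  have hLpartial : ∀ a : ℕ → A, (∀ n, a n ∈ L) → ∀ n, partialSups a n ∈ L := by
    intro a ha n
    induction n with
    | zero => simpa [partialSups_zero] using ha 0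
    | succ n ih => rw [← Order.succ_eq_add_one, partialSups_succ]; exact hLsup _ ih _ (ha (n + 1))
  -- `L` is closed under LUBs of arbitrary sequences.
  have hLall : ∀ a : ℕ → A, (∀ n, a n ∈ L) → ∀ s : A, IsLUB (Set.range a) s → s ∈ L := by
    intro a ha s hs
    have hd : ∀ n, disjointed a n ∈ L := by
      intro n
      cases n with
      | zero => simpa [disjointed_zero] using ha 0
      | succ n =>
          rw [← Order.succ_eq_add_one, disjointed_succ _ (not_isMax n), sdiff_eq]
          exact hLinf _ (ha (n + 1)) _ (hLcompl _ (hLpartial a ha n))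
    have hpd : ∀ i j, i ≠ j → disjointed a i ⊓ disjointed a j = ⊥ := by
      intro i j hij
      exact (disjoint_disjointed a hij).eq_bot
    have hlub : IsLUB (Set.range (disjointed a)) s := by
      constructor
      · rintro _ ⟨n, rfl⟩
        exact (disjointed_le a n).trans (hs.1 ⟨n, rfl⟩)
      · intro u hu
        apply hs.2
        rintro _ ⟨n, rfl⟩
        have h1 : a n ≤ partialSups (disjointed a) n := by
          rw [partialSups_disjointed]; exact le_partialSups a n
        exact h1.trans (partialSups_le _ _ _ fun i _ => hu ⟨i, rfl⟩)
    exact hLdsup _ hpd hd s hlub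
  have hLuniv : L = Set.univ := hgen L hLsub hLcompl hLall
  -- μ₁ and μ₂ agree on a λ-system
  have add₁ : ∀ x y : A, x ⊓ y = ⊥ → μ₁ (x ⊔ y) = μ₁ x + μ₁ y := by
    intro x y h
    rw [h₁ (pairSeq x y) (pairSeq_disj h) _ (pairSeq_isLUB x y), tsum_pairSeq μ₁ h₁0]
  have add₂ : ∀ x y : A, x ⊓ y = ⊥ → μ₂ (x ⊔ y) = μ₂ x + μ₂ y := by
    intro x y h
    rw [h₂ (pairSeq x y) (pairSeq_disj h) _ (pairSeq_isLUB x y), tsum_pairSeq μ₂ h₂0]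
  have hDcompl : ∀ x : A, μ₁ x = μ₂ x → μ₁ xᶜ = μ₂ xᶜ := by
    intro x hx
    have e₁ : μ₁ x + μ₁ xᶜ = μ₁ ⊤ := by
      rw [← add₁ x xᶜ (by simp), sup_compl_eq_top]
    have e₂ : μ₂ x + μ₂ xᶜ = μ₂ ⊤ := by
      rw [← add₂ x xᶜ (by simp), sup_compl_eq_top]
    have hfin : μ₁ x ≠ ∞ := by
      intro h
      rw [h] at e₁
      simp at e₁
      exact (lt_of_le_of_lt htop1 (by norm_num)).ne e₁.symm
    have : μ₁ x + μ₁ xᶜ = μ₁ x + μ₂ xᶜ := by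
      rw [e₁, heq ⊤ htop, ← e₂, hx]
    exact (ENNReal.add_right_inj hfin).mp this
  have hDmem : ∀ x ∈ L, μ₁ x = μ₂ x := by
    intro x hx
    exact hx {z | μ₁ z = μ₂ z} heq (fun z hz => hDcompl z hz)
      (fun a hdisj ha s hs => by
        show μ₁ s = μ₂ s
        rw [h₁ a hdisj s hs, h₂ a hdisj s hs]
        exact tsum_congr ha)
  funext x
  exact hDmem x (hLuniv ▸ Set.mem_univ x)
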